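/- Accessible information formula for uniform ensemble: Let E = { 1/N, ρ_m } be an ensemble of N equiprobable states ρ_m = (1/K)Σ_k |Ψ_{mk}⟩⟨Ψ_{mk}| in C^N, where for each k the {|Ψ_{mk}⟩}_m form an orthonormal basis. Then for any rank-one POVM {μ_i |Φ_i⟩⟨Φ_i|}_i with Σ_i μ_i = N, the mutual information between the message M (uniform on N values) and the measurement outcome equals log₂ N − Σ_i (μ_i/N) H[Q(Φ_i)], where Q_m(Φ) = (1/K)Σ_k |⟨Φ|Ψ_{mk}⟩|². -/
import Mathlib


/-- `η(x) = −x log₂ x`. -/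
noncomputable def eta2 (x : ℝ) : ℝ := -x * Real.logb 2 x

lemma eta2_mul' {a : ℝ} (ha : a ≠ 0) (b : ℝ) :
    eta2 (a * b) = a * eta2 b + b * eta2 a := by
  rcases eq_or_ne b 0 with rb | rb
  · simp [rb, eta2]
  · unfold eta2
    rw [Real.logb, Real.logb, Real.logb, Real.log_mul ha rb]
    ring

lemma csq (z : ℂ) : ((‖z‖^2 : ℝ) : ℂ) = z * star z := by
  push_cast
  rw [← Complex.mul_conj']
  rfl

lemma key {n : ℕ} {ι : Type*} [Fintype ι] (c : ι → ℝ) (a : ι → Fin n → ℂ)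
    (b : Fin n → ℂ)
    (H : ∀ w w' : Fin n, ∑ x, (c x : ℂ) * (a x w * star (a x w')) = if w = w' then 1 else 0) :
    ∑ x, c x * ‖∑ w, a x w * b w‖^2 = ∑ w, ‖b w‖^2 := by
  rw [← Complex.ofReal_inj]
  rw [Complex.ofReal_sum, Complex.ofReal_sum]
  simp only [Complex.ofReal_mul]
  have h1 : ∀ x : ι, ((‖∑ w, a x w * b w‖^2 : ℝ) : ℂ)
      = ∑ w, ∑ w', (a x w * star (a x w')) * (b w * star (b w')) := by
    intro x
    rw [csq, star_sum, Finset.sum_mul_sum]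
    refine Finset.sum_congr rfl fun w _ => Finset.sum_congr rfl fun w' _ => ?_
    simp only [star_mul']
    ring
  calc ∑ x, (c x : ℂ) * ((‖∑ w, a x w * b w‖^2 : ℝ) : ℂ)
      = ∑ w, ∑ w', (∑ x, (c x : ℂ) * (a x w * star (a x w'))) * (b w * star (b w')) := by
        simp only [h1, Finset.mul_sum, Finset.sum_mul]
        rw [Finset.sum_comm]
        refine Finset.sum_congr rfl fun w _ => ?_
        rw [Finset.sum_comm]
        exact Finset.sum_congr rfl fun w' _ => Finset.sum_congr rfl fun x _ => by ring
    _ = ∑ w, (b w * star (b w)) := by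
        simp only [H]
        simp [Finset.sum_ite_eq]
    _ = ∑ w, ((‖b w‖^2 : ℝ) : ℂ) := by
        refine Finset.sum_congr rfl fun w _ => (csq _).symm

lemma col_orth {n : ℕ} (A : Fin n → Fin n → ℂ)
    (h : ∀ m m' : Fin n, ∑ i, star (A m i) * A m' i = if m = m' then 1 else 0) :
    ∀ w w' : Fin n, ∑ m, A m w * star (A m w') = if w = w' then 1 else 0 := by
  let M : Matrix (Fin n) (Fin n) ℂ := Matrix.of A
  have h1 : (M.map star) * M.transpose = 1 := by
    ext m m'
    have := h m m'
    simp only [Matrix.mul_apply, Matrix.map_apply, Matrix.transpose_apply, Matrix.one_apply,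
      Matrix.of_apply, M]
    exact this
  have h2 : M.transpose * (M.map star) = 1 := mul_eq_one_comm.mp h1
  intro w w'
  have h3 : (M.transpose * M.map star) w w' = (1 : Matrix (Fin n) (Fin n) ℂ) w w' := by rw [h2]
  simpa [Matrix.mul_apply, Matrix.map_apply, Matrix.transpose_apply, Matrix.one_apply,
    Matrix.of_apply, M] using h3

lemma swap_pull {α β : Type*} [Fintype α] [Fintype β] (c : ℝ) (g : α → ℝ) (f : α → β → ℝ) :
    ∑ i, g i * (c * ∑ k, f i k) = c * ∑ k, ∑ i, g i * f i k := by
  simp only [Finset.mul_sum]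
  rw [Finset.sum_comm]
  exact Finset.sum_congr rfl fun k _ => Finset.sum_congr rfl fun i _ => by ring

/-- accessible information formula for the uniform ensemble: for the
ensemble `{1/N, ρ_m}` with `ρ_m = (1/K)Σ_k |Ψ_{mk}⟩⟨Ψ_{mk}|` (the `{Ψ_{mk}}_m` orthonormal
bases), and any rank-one POVM `{μ_i|Φ_i⟩⟨Φ_i|}` with `Σ μ_i = N`, the mutual information
`H(M) + H(I) − H(M,I)` between the message and the outcome equals
`log₂ N − Σ_i (μ_i/N) H[Q(Φ_i)]`, where `Q_m(Φ) = (1/K)Σ_k |⟨Φ|Ψ_{mk}⟩|²`. -/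
theorem stmt14 (N K : ℕ) (hN : 0 < N) (hK : 0 < K)
    (Ψ : Fin N → Fin K → (Fin N → ℂ))
    (hONB : ∀ k (m m' : Fin N),
      (∑ i, star (Ψ m k i) * Ψ m' k i) = if m = m' then 1 else 0)
    {ι : Type*} [Fintype ι] (μ : ι → ℝ) (Φ : ι → (Fin N → ℂ))
    (hμ : ∀ i, 0 < μ i)
    (hunit : ∀ i, ∑ w, ‖Φ i w‖ ^ 2 = 1)
    (hPOVM : ∀ a b : Fin N,
      ∑ i, (μ i : ℂ) * (Φ i a * star (Φ i b)) = if a = b then 1 else 0)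
    (Q : (Fin N → ℂ) → Fin N → ℝ)
    (hQ : ∀ φ m, Q φ m = (K : ℝ)⁻¹ * ∑ k, ‖∑ w, star (φ w) * Ψ m k w‖ ^ 2)
    (p : Fin N → ι → ℝ)
    (hp : ∀ m i, p m i = (N : ℝ)⁻¹ * (μ i * Q (Φ i) m)) :
    (∑ m, eta2 (∑ i, p m i)) + (∑ i, eta2 (∑ m, p m i)) - (∑ m, ∑ i, eta2 (p m i))
      = Real.logb 2 N - ∑ i, (μ i / N) * (∑ m, eta2 (Q (Φ i) m)) := by
  have hNne : (N : ℝ) ≠ 0 := Nat.cast_ne_zero.mpr hN.ne'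
  have hKne : (K : ℝ) ≠ 0 := Nat.cast_ne_zero.mpr hK.ne'
  -- each Ψ m k is a unit vector
  have hΨnorm : ∀ (m : Fin N) (k : Fin K), ∑ w, ‖Ψ m k w‖ ^ 2 = 1 := by
    intro m k
    have h := hONB k m m
    rw [if_pos rfl] at h
    rw [← Complex.ofReal_inj, Complex.ofReal_sum, Complex.ofReal_one, ← h]
    refine Finset.sum_congr rfl fun w _ => ?_
    rw [csq]; ring
  -- Q sums to 1 over messages (completeness of each ONB)
  have hQsum : ∀ i, ∑ m, Q (Φ i) m = 1 := by
    intro i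
    simp only [hQ]
    have hinner : ∀ k : Fin K, ∑ m, ‖∑ w, star (Φ i w) * Ψ m k w‖ ^ 2 = 1 := by
      intro k
      have hc := col_orth (fun m w => Ψ m k w) (fun m m' => hONB k m m')
      have hKey := key (fun _ : Fin N => (1 : ℝ)) (fun m w => Ψ m k w)
        (fun w => star (Φ i w)) (by intro w w'; simpa using hc w w')
      simp only [one_mul, norm_star] at hKey
      rw [hunit i] at hKey
      rw [← hKey]
      refine Finset.sum_congr rfl fun m _ => ?_
      have : (∑ w, star (Φ i w) * Ψ m k w) = ∑ w, Ψ m k w * star (Φ i w) :=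
        Finset.sum_congr rfl fun w _ => mul_comm _ _
      rw [this]
    have := swap_pull (α := Fin N) (β := Fin K) ((K : ℝ)⁻¹) (fun _ => 1)
      (fun m k => ‖∑ w, star (Φ i w) * Ψ m k w‖ ^ 2)
    simp only [one_mul] at this
    rw [this]
    simp only [hinner]
    simp [hKne]
  -- POVM completeness: ∑ i μ i Q = 1
  have hPsum : ∀ m, ∑ i, μ i * Q (Φ i) m = 1 := by
    intro m
    simp only [hQ]
    have hinner : ∀ k : Fin K, ∑ i, μ i * ‖∑ w, star (Φ i w) * Ψ m k w‖ ^ 2 = 1 := by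
      intro k
      have hKey := key μ (fun i w => star (Φ i w)) (fun w => Ψ m k w)
        (by
          intro w w'
          have h := hPOVM w' w
          simp only [star_star]
          rw [show (if w = w' then (1 : ℂ) else 0) = if w' = w then 1 else 0 by
            simp [eq_comm], ← h]
          exact Finset.sum_congr rfl fun x _ => by ring)
      rw [hΨnorm m k] at hKey
      exact hKey
    rw [swap_pull ((K : ℝ)⁻¹) μ (fun i k => ‖∑ w, star (Φ i w) * Ψ m k w‖ ^ 2)]
    simp only [hinner]
    simp [hKne]
  set g : ι → ℝ := fun i => ∑ m, eta2 (Q (Φ i) m) with hg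
  have t1 : ∀ m : Fin N, (∑ i, p m i) = (N : ℝ)⁻¹ := by
    intro m
    simp only [hp]
    rw [← Finset.mul_sum, hPsum m, mul_one]
  have t2 : ∀ i, (∑ m, p m i) = (N : ℝ)⁻¹ * μ i := by
    intro i
    simp only [hp]
    rw [← Finset.mul_sum, ← Finset.mul_sum, hQsum i, mul_one]
  have t3 : ∀ i, ∑ m, eta2 (p m i)
      = ((N : ℝ)⁻¹ * μ i) * g i + eta2 ((N : ℝ)⁻¹ * μ i) := by
    intro i
    have ha : (N : ℝ)⁻¹ * μ i ≠ 0 := by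
      have := (hμ i).ne'
      positivity
    calc ∑ m, eta2 (p m i)
        = ∑ m, (((N : ℝ)⁻¹ * μ i) * eta2 (Q (Φ i) m)
            + Q (Φ i) m * eta2 ((N : ℝ)⁻¹ * μ i)) := by
          refine Finset.sum_congr rfl fun m _ => ?_
          rw [hp, ← mul_assoc]
          exact eta2_mul' ha _
      _ = ((N : ℝ)⁻¹ * μ i) * g i + eta2 ((N : ℝ)⁻¹ * μ i) := by
          rw [Finset.sum_add_distrib, ← Finset.mul_sum, ← Finset.sum_mul, hQsum i, one_mul]
  have hH : ∑ _m : Fin N, eta2 ((N : ℝ)⁻¹) = Real.logb 2 N := by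
    rw [Finset.sum_const, Finset.card_univ, Fintype.card_fin, nsmul_eq_mul]
    unfold eta2
    rw [Real.logb_inv]
    field_simp
  rw [Finset.sum_comm]
  simp only [t1, t2, t3, hH]
  rw [Finset.sum_add_distrib]
  have : ∀ i ∈ Finset.univ, (μ i / (N : ℝ)) * g i = ((N : ℝ)⁻¹ * μ i) * g i := by
    intro i _
    rw [div_eq_mul_inv]; ring
  rw [Finset.sum_congr rfl this]
  ring
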